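/- For all integers k ≥ 2, n ≥ 1, p ≥ 0, r ≥ 0, the images of c₂ and d₂ in G(k,n,p,r) commute and satisfy c₂^p = 1 and d₂^r = 1; consequently G(k,n,p,r) is an abelian group. (Final step in the proof of Lemma 3.3.) -/

import Mathlib

/-- Generators of the presentation: `a1, b1, a2, b2`, the tilde generators
`ct = c̃`, `dt = d̃`, and `c i`, `d i` for `i : Fin k`, where `c i` denotes
`c_{i+1}` (so `c ⟨0,_⟩ = c₁`, `c ⟨1,_⟩ = c₂`, …). -/
inductive Gen (k : ℕ) : Type
  | a1 | b1 | a2 | b2 | ct | dt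
  | c : Fin k → Gen k
  | d : Fin k → Gen k

namespace Gen

variable (k : ℕ)

def A1 : FreeGroup (Gen k) := FreeGroup.of Gen.a1
def B1 : FreeGroup (Gen k) := FreeGroup.of Gen.b1
def A2 : FreeGroup (Gen k) := FreeGroup.of Gen.a2
def B2 : FreeGroup (Gen k) := FreeGroup.of Gen.b2
def Ct : FreeGroup (Gen k) := FreeGroup.of Gen.ct
def Dt : FreeGroup (Gen k) := FreeGroup.of Gen.dt
def C (i : Fin k) : FreeGroup (Gen k) := FreeGroup.of (Gen.c i)
def D (i : Fin k) : FreeGroup (Gen k) := FreeGroup.of (Gen.d i)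

end Gen

open Gen commutatorElement in
/-- The relators of the presentation of `π₁(M)` from Lemma 3.2 (a relation
`w = v` is encoded as the relator `w * v⁻¹`). -/
def rels (k n p r : ℕ) : Set (FreeGroup (Gen k)) :=
  { x |
    -- a₂ = c̃⁻¹ a₁ c̃
    x = A2 k * ((Ct k)⁻¹ * A1 k * Ct k)⁻¹ ∨
    -- b₂ = c̃⁻¹ b₁ c̃
    x = B2 k * ((Ct k)⁻¹ * B1 k * Ct k)⁻¹ ∨
    -- b₁ = c̃⁻¹ b₂ c̃
    x = B1 k * ((Ct k)⁻¹ * B2 k * Ct k)⁻¹ ∨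
    -- [b₂, d̃] = 1
    x = ⁅B2 k, Dt k⁆ ∨
    -- [a₁⁻¹ b₁⁻¹ a₂, d̃] = 1
    x = ⁅(A1 k)⁻¹ * (B1 k)⁻¹ * A2 k, Dt k⁆ ∨
    -- [a₂⁻¹ b₂⁻¹ a₁, d̃] = 1
    x = ⁅(A2 k)⁻¹ * (B2 k)⁻¹ * A1 k, Dt k⁆ ∨
    -- c̃⁻¹ a₁ a₂ c̃ a₁⁻¹ a₂⁻¹ = d̃
    x = (Ct k)⁻¹ * A1 k * A2 k * Ct k * (A1 k)⁻¹ * (A2 k)⁻¹ * (Dt k)⁻¹ ∨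
    -- [a₁, d̃⁻¹] = c̃
    x = ⁅A1 k, (Dt k)⁻¹⁆ * (Ct k)⁻¹ ∨
    -- [b₁, d̃] = 1
    x = ⁅B1 k, Dt k⁆ ∨
    -- [a₁, b₁][a₂, b₂] = 1
    x = ⁅A1 k, B1 k⁆ * ⁅A2 k, B2 k⁆ ∨
    -- [c₁,d₁][c₂,d₂]⋯[c_k,d_k][c̃,d̃] = 1
    x = (List.ofFn fun i : Fin k => ⁅C k i, D k i⁆).prod * ⁅Ct k, Dt k⁆ ∨
    -- relations involving c₁, d₁  (index 0)
    (∃ i : Fin k, (i : ℕ) = 0 ∧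
      (x = ⁅(B1 k)⁻¹, (D k i)⁻¹⁆ * (A1 k)⁻¹ ∨      -- [b₁⁻¹,d₁⁻¹] = a₁
       x = ⁅(A1 k)⁻¹, D k i⁆ * (B1 k)⁻¹ ∨           -- [a₁⁻¹,d₁] = b₁
       x = ⁅(B2 k)⁻¹, (D k i)⁻¹⁆ * (C k i)⁻¹ ∨      -- [b₂⁻¹,d₁⁻¹] = c₁
       x = ⁅B2 k, (C k i)⁻¹⁆ ^ n * (D k i)⁻¹ ∨      -- [b₂,c₁⁻¹]ⁿ = d₁
       x = ⁅A1 k, C k i⁆ ∨ x = ⁅B1 k, C k i⁆ ∨      -- [a₁,c₁] = [b₁,c₁] = 1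
       x = ⁅A2 k, C k i⁆ ∨ x = ⁅A2 k, D k i⁆)) ∨    -- [a₂,c₁] = [a₂,d₁] = 1
    -- relations involving c₂, d₂  (index 1)
    (∃ i : Fin k, (i : ℕ) = 1 ∧
      (x = ⁅(B2 k)⁻¹, (D k i)⁻¹⁆ * ((C k i) ^ p)⁻¹ ∨  -- [b₂⁻¹,d₂⁻¹] = c₂ᵖ
       x = ⁅B2 k, (C k i)⁻¹⁆ * ((D k i) ^ r)⁻¹)) ∨    -- [b₂,c₂⁻¹] = d₂ʳ
    -- relations [b₂⁻¹,d_i⁻¹] = c_i, [b₂,c_i⁻¹] = d_i for 3 ≤ i ≤ k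
    (∃ i : Fin k, 2 ≤ (i : ℕ) ∧
      (x = ⁅(B2 k)⁻¹, (D k i)⁻¹⁆ * (C k i)⁻¹ ∨
       x = ⁅B2 k, (C k i)⁻¹⁆ * (D k i)⁻¹)) ∨
    -- commuting relations for 2 ≤ i ≤ k
    (∃ i : Fin k, 1 ≤ (i : ℕ) ∧
      (x = ⁅A2 k, C k i⁆ ∨ x = ⁅A2 k, D k i⁆ ∨
       x = ⁅A1 k, C k i⁆ ∨ x = ⁅B1 k, D k i⁆ ∨
       x = ⁅A1 k, D k i⁆ ∨ x = ⁅B1 k, C k i⁆)) }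

/-- The group `G(k,n,p,r)` of Lemma 3.2/3.3: the fundamental group of the
surgered manifold, given by the above presentation. -/
abbrev G (k n p r : ℕ) : Type := PresentedGroup (rels k n p r)

/-- The image in `G k n p r` of a generator. -/
abbrev gen (k n p r : ℕ) (g : Gen k) : G k n p r := PresentedGroup.of g

open commutatorElement

section Helpers

private lemma prod_ofFn_eq_single {M : Type*} [Monoid M] :
    ∀ {k : ℕ} (f : Fin k → M) (j : Fin k), (∀ i, i ≠ j → f i = 1) →
      (List.ofFn f).prod = f j := by
  intro k
  induction k with
  | zero => exact fun f j _ => j.elim0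
  | succ m ih =>
    intro f j hj
    rw [List.ofFn_succ, List.prod_cons]
    cases j using Fin.cases with
    | zero =>
      have h1 : (List.ofFn fun i : Fin m => f i.succ).prod = 1 := by
        apply List.prod_eq_one
        intro x hx
        obtain ⟨i, rfl⟩ := Set.mem_range.mp ((List.mem_ofFn' _ _).mp hx)
        exact hj i.succ (Fin.succ_ne_zero i)
      rw [h1, mul_one]
    | succ j' =>
      rw [hj 0 (Fin.succ_ne_zero j').symm, one_mul]
      exact ih _ j' fun i hi => hj i.succ (by simpa [Fin.succ_inj] using hi)

variable (k n p r : ℕ)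

private def pm : FreeGroup (Gen k) →* G k n p r := QuotientGroup.mk' _

private lemma relone {w : FreeGroup (Gen k)} (hw : w ∈ rels k n p r) :
    pm k n p r w = 1 :=
  (QuotientGroup.eq_one_iff w).mpr (Subgroup.subset_normalClosure hw)

private lemma pm_of (g : Gen k) : pm k n p r (FreeGroup.of g) = gen k n p r g := rfl

private lemma pm_surj : Function.Surjective (pm k n p r) :=
  QuotientGroup.mk'_surjective _

end Helpers

/-- final step of the proof of Lemma 3.3: the images of
`c₂` and `d₂` in `G(k,n,p,r)` commute and satisfy `c₂ᵖ = 1` and `d₂ʳ = 1`;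
consequently `G(k,n,p,r)` is abelian. -/
theorem c2_d2_commute_and_torsion (k n p r : ℕ) (hk : 2 ≤ k) (hn : 1 ≤ n) :
    Commute (gen k n p r (Gen.c ⟨1, by omega⟩)) (gen k n p r (Gen.d ⟨1, by omega⟩)) ∧
    (gen k n p r (Gen.c ⟨1, by omega⟩)) ^ p = 1 ∧
    (gen k n p r (Gen.d ⟨1, by omega⟩)) ^ r = 1 ∧
    ∀ x y : G k n p r, x * y = y * x := by
  have hk0 : 0 < k := by omega
  have hk1 : 1 < k := by omega
  set i0 : Fin k := ⟨0, hk0⟩ with hi0def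
  set i1 : Fin k := ⟨1, hk1⟩ with hi1def
  -- extract the relations we need, as equations in G
  have hr1 : pm k n p r (Gen.A2 k * ((Gen.Ct k)⁻¹ * Gen.A1 k * Gen.Ct k)⁻¹) = 1 :=
    relone k n p r (Or.inl rfl)
  have hr2 : pm k n p r (Gen.B2 k * ((Gen.Ct k)⁻¹ * Gen.B1 k * Gen.Ct k)⁻¹) = 1 :=
    relone k n p r (Or.inr (Or.inl rfl))
  have hr3 : pm k n p r (Gen.B1 k * ((Gen.Ct k)⁻¹ * Gen.B2 k * Gen.Ct k)⁻¹) = 1 :=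
    relone k n p r (Or.inr (Or.inr (Or.inl rfl)))
  have hr4 : pm k n p r ⁅Gen.B2 k, Gen.Dt k⁆ = 1 :=
    relone k n p r (Or.inr (Or.inr (Or.inr (Or.inl rfl))))
  have hr5 : pm k n p r ⁅(Gen.A1 k)⁻¹ * (Gen.B1 k)⁻¹ * Gen.A2 k, Gen.Dt k⁆ = 1 :=
    relone k n p r (Or.inr (Or.inr (Or.inr (Or.inr (Or.inl rfl)))))
  have hr6 : pm k n p r ⁅(Gen.A2 k)⁻¹ * (Gen.B2 k)⁻¹ * Gen.A1 k, Gen.Dt k⁆ = 1 :=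
    relone k n p r (Or.inr (Or.inr (Or.inr (Or.inr (Or.inr (Or.inl rfl))))))
  have hr7 : pm k n p r ((Gen.Ct k)⁻¹ * Gen.A1 k * Gen.A2 k * Gen.Ct k * (Gen.A1 k)⁻¹ *
      (Gen.A2 k)⁻¹ * (Gen.Dt k)⁻¹) = 1 :=
    relone k n p r (Or.inr (Or.inr (Or.inr (Or.inr (Or.inr (Or.inr (Or.inl rfl)))))))
  have hr8 : pm k n p r (⁅Gen.A1 k, (Gen.Dt k)⁻¹⁆ * (Gen.Ct k)⁻¹) = 1 :=
    relone k n p r (Or.inr (Or.inr (Or.inr (Or.inr (Or.inr (Or.inr (Or.inr (Or.inl rfl))))))))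
  have hr9 : pm k n p r ⁅Gen.B1 k, Gen.Dt k⁆ = 1 :=
    relone k n p r (Or.inr (Or.inr (Or.inr (Or.inr (Or.inr (Or.inr (Or.inr (Or.inr (Or.inl rfl)))))))))
  have hr11 : pm k n p r ((List.ofFn fun i : Fin k => ⁅Gen.C k i, Gen.D k i⁆).prod *
      ⁅Gen.Ct k, Gen.Dt k⁆) = 1 :=
    relone k n p r (Or.inr (Or.inr (Or.inr (Or.inr (Or.inr (Or.inr (Or.inr (Or.inr (Or.inr (Or.inr (Or.inl rfl)))))))))))
  have block12 : ∀ i : Fin k, (i : ℕ) = 0 → ∀ w,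
      (w = ⁅(Gen.B1 k)⁻¹, (Gen.D k i)⁻¹⁆ * (Gen.A1 k)⁻¹ ∨
       w = ⁅(Gen.A1 k)⁻¹, Gen.D k i⁆ * (Gen.B1 k)⁻¹ ∨
       w = ⁅(Gen.B2 k)⁻¹, (Gen.D k i)⁻¹⁆ * (Gen.C k i)⁻¹ ∨
       w = ⁅Gen.B2 k, (Gen.C k i)⁻¹⁆ ^ n * (Gen.D k i)⁻¹ ∨
       w = ⁅Gen.A1 k, Gen.C k i⁆ ∨ w = ⁅Gen.B1 k, Gen.C k i⁆ ∨
       w = ⁅Gen.A2 k, Gen.C k i⁆ ∨ w = ⁅Gen.A2 k, Gen.D k i⁆) → pm k n p r w = 1 := by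
    intro i hi w hw
    exact relone k n p r (Or.inr (Or.inr (Or.inr (Or.inr (Or.inr (Or.inr (Or.inr (Or.inr
      (Or.inr (Or.inr (Or.inr (Or.inl ⟨i, hi, hw⟩))))))))))))
  have block13 : ∀ i : Fin k, (i : ℕ) = 1 → ∀ w,
      (w = ⁅(Gen.B2 k)⁻¹, (Gen.D k i)⁻¹⁆ * ((Gen.C k i) ^ p)⁻¹ ∨
       w = ⁅Gen.B2 k, (Gen.C k i)⁻¹⁆ * ((Gen.D k i) ^ r)⁻¹) → pm k n p r w = 1 := by
    intro i hi w hw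
    exact relone k n p r (Or.inr (Or.inr (Or.inr (Or.inr (Or.inr (Or.inr (Or.inr (Or.inr
      (Or.inr (Or.inr (Or.inr (Or.inr (Or.inl ⟨i, hi, hw⟩)))))))))))))
  have block14 : ∀ i : Fin k, 2 ≤ (i : ℕ) → ∀ w,
      (w = ⁅(Gen.B2 k)⁻¹, (Gen.D k i)⁻¹⁆ * (Gen.C k i)⁻¹ ∨
       w = ⁅Gen.B2 k, (Gen.C k i)⁻¹⁆ * (Gen.D k i)⁻¹) → pm k n p r w = 1 := by
    intro i hi w hw
    exact relone k n p r (Or.inr (Or.inr (Or.inr (Or.inr (Or.inr (Or.inr (Or.inr (Or.inr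
      (Or.inr (Or.inr (Or.inr (Or.inr (Or.inr (Or.inl ⟨i, hi, hw⟩))))))))))))))
  -- relations at special indices
  have hi0 : ((i0 : Fin k) : ℕ) = 0 := rfl
  have hi1 : ((i1 : Fin k) : ℕ) = 1 := rfl
  have hr12 := block12 i0 hi0 _ (Or.inl rfl)
  have hr13 := block12 i0 hi0 _ (Or.inr (Or.inl rfl))
  have hr14 := block12 i0 hi0 _ (Or.inr (Or.inr (Or.inl rfl)))
  have hr15 := block12 i0 hi0 _ (Or.inr (Or.inr (Or.inr (Or.inl rfl))))
  have hr17 := block12 i0 hi0 _ (Or.inr (Or.inr (Or.inr (Or.inr (Or.inr (Or.inl rfl))))))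
  have hr20 := block13 i1 hi1 _ (Or.inl rfl)
  have hr21 := block13 i1 hi1 _ (Or.inr rfl)
  -- convert to equations between generator images
  simp only [map_mul, map_inv, map_pow, map_commutatorElement, Gen.A1, Gen.A2, Gen.B1,
    Gen.B2, Gen.Ct, Gen.Dt, Gen.C, Gen.D, pm_of] at hr1 hr2 hr3 hr4 hr5 hr6 hr7 hr8 hr9 hr12 hr13 hr14 hr15 hr17 hr20 hr21
  rw [mul_inv_eq_one] at hr1 hr2 hr3 hr7 hr8 hr12 hr13 hr14 hr15 hr20 hr21
  -- short names
  set A : G k n p r := gen k n p r Gen.a1 with hA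
  set B : G k n p r := gen k n p r Gen.b1 with hB
  set A' : G k n p r := gen k n p r Gen.a2 with hA'
  set B' : G k n p r := gen k n p r Gen.b2 with hB'
  set S : G k n p r := gen k n p r Gen.ct with hS
  set T : G k n p r := gen k n p r Gen.dt with hT
  set C0 : G k n p r := gen k n p r (Gen.c i0) with hC0
  set D0 : G k n p r := gen k n p r (Gen.d i0) with hD0
  set C1 : G k n p r := gen k n p r (Gen.c i1) with hC1
  set D1 : G k n p r := gen k n p r (Gen.d i1) with hD1
  -- Step 1: B and B' commute
  have c4 : Commute B' T := commutatorElement_eq_one_iff_commute.mp hr4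
  have c9 : Commute B T := commutatorElement_eq_one_iff_commute.mp hr9
  have c5 : Commute (A⁻¹ * B⁻¹ * A') T := commutatorElement_eq_one_iff_commute.mp hr5
  have c6 : Commute (A'⁻¹ * B'⁻¹ * A) T := commutatorElement_eq_one_iff_commute.mp hr6
  have c56 : Commute (A⁻¹ * (B⁻¹ * B'⁻¹) * A) T := by
    have h := c5.mul_left c6
    rwa [show (A⁻¹ * B⁻¹ * A') * (A'⁻¹ * B'⁻¹ * A) = A⁻¹ * (B⁻¹ * B'⁻¹) * A by group] at h
  have cWT : Commute (B⁻¹ * B'⁻¹) T := c9.inv_left.mul_left c4.inv_left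
  have F1 : A * T * A⁻¹ = T * S⁻¹ := by
    rw [← hr8, commutatorElement_def]; group
  have hW1 : (B⁻¹ * B'⁻¹) * (T * S⁻¹) = (T * S⁻¹) * (B⁻¹ * B'⁻¹) := by
    have hc : (A⁻¹ * (B⁻¹ * B'⁻¹) * A) * T = T * (A⁻¹ * (B⁻¹ * B'⁻¹) * A) := c56
    calc (B⁻¹ * B'⁻¹) * (T * S⁻¹) = (B⁻¹ * B'⁻¹) * (A * T * A⁻¹) := by rw [F1]
      _ = A * ((A⁻¹ * (B⁻¹ * B'⁻¹) * A) * T) * A⁻¹ := by group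
      _ = A * (T * (A⁻¹ * (B⁻¹ * B'⁻¹) * A)) * A⁻¹ := by rw [hc]
      _ = (A * T * A⁻¹) * (B⁻¹ * B'⁻¹) := by group
      _ = (T * S⁻¹) * (B⁻¹ * B'⁻¹) := by rw [F1]
  have cWS : Commute (B⁻¹ * B'⁻¹) S := by
    have h1 : T * ((B⁻¹ * B'⁻¹) * S⁻¹) = T * (S⁻¹ * (B⁻¹ * B'⁻¹)) := by
      calc T * ((B⁻¹ * B'⁻¹) * S⁻¹) = (T * (B⁻¹ * B'⁻¹)) * S⁻¹ := by group
        _ = ((B⁻¹ * B'⁻¹) * T) * S⁻¹ := by rw [← cWT.eq]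
        _ = (B⁻¹ * B'⁻¹) * (T * S⁻¹) := by group
        _ = (T * S⁻¹) * (B⁻¹ * B'⁻¹) := hW1
        _ = T * (S⁻¹ * (B⁻¹ * B'⁻¹)) := by group
    have h2 : (B⁻¹ * B'⁻¹) * S⁻¹ = S⁻¹ * (B⁻¹ * B'⁻¹) := mul_left_cancel h1
    have h3 : Commute (B⁻¹ * B'⁻¹) S⁻¹ := h2
    simpa using h3.inv_right
  have hBS : S⁻¹ * B⁻¹ * S = B'⁻¹ := by rw [hr2]; group
  have hB'S : S⁻¹ * B'⁻¹ * S = B⁻¹ := by rw [hr3]; group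
  have comm_inv : B⁻¹ * B'⁻¹ = B'⁻¹ * B⁻¹ := by
    have h1 : S⁻¹ * (B⁻¹ * B'⁻¹) * S = B⁻¹ * B'⁻¹ := by
      calc S⁻¹ * (B⁻¹ * B'⁻¹) * S = S⁻¹ * ((B⁻¹ * B'⁻¹) * S) := by group
        _ = S⁻¹ * (S * (B⁻¹ * B'⁻¹)) := by rw [cWS.eq]
        _ = B⁻¹ * B'⁻¹ := by group
    calc B⁻¹ * B'⁻¹ = S⁻¹ * (B⁻¹ * B'⁻¹) * S := h1.symm
      _ = (S⁻¹ * B⁻¹ * S) * (S⁻¹ * B'⁻¹ * S) := by group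
      _ = B'⁻¹ * B⁻¹ := by rw [hBS, hB'S]
  have cBB' : Commute B B' := by
    have h : Commute B⁻¹ B'⁻¹ := comm_inv
    simpa using h.inv_inv
  -- B commutes with C0, hence with D0 = [B', C0⁻¹]^n
  have cBC0 : Commute B C0 := commutatorElement_eq_one_iff_commute.mp hr17
  have cBD0 : Commute B D0 := by
    have h1 : Commute B ⁅B', C0⁻¹⁆ := by
      rw [commutatorElement_def]
      exact ((cBB'.mul_right cBC0.inv_right).mul_right cBB'.inv_right).mul_right cBC0
    have h2 : Commute B (⁅B', C0⁻¹⁆ ^ n) := h1.pow_right n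
    rwa [hr15] at h2
  -- collapse
  have hA1 : A = 1 := by
    rw [← hr12]
    exact commutatorElement_eq_one_iff_commute.mpr cBD0.inv_left.inv_right
  have hB1 : B = 1 := by
    rw [← hr13, hA1, commutatorElement_def]; group
  have hA'1 : A' = 1 := by rw [hr1, hA1]; group
  have hB'1 : B' = 1 := by rw [hr2, hB1]; group
  have hS1 : S = 1 := by rw [← hr8, hA1, commutatorElement_def]; group
  have hT1 : T = 1 := by
    have := hr7
    rw [hA1, hA'1, hS1] at this
    rw [← this]; group
  have hC01 : C0 = 1 := by rw [← hr14, hB'1, commutatorElement_def]; group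
  have hD01 : D0 = 1 := by
    rw [← hr15, hB'1]
    have : ⁅(1 : G k n p r), C0⁻¹⁆ = 1 := by rw [commutatorElement_def]; group
    rw [this, one_pow]
  have hC1p : C1 ^ p = 1 := by
    rw [← hr20, hB'1, commutatorElement_def]; group
  have hD1r : D1 ^ r = 1 := by
    rw [← hr21, hB'1, commutatorElement_def]; group
  have hb2g : gen k n p r Gen.b2 = 1 := by rw [← hB']; exact hB'1
  -- triviality of c_i, d_i for i ≠ i1
  have hcd : ∀ i : Fin k, (i : ℕ) ≠ 1 →
      gen k n p r (Gen.c i) = 1 ∧ gen k n p r (Gen.d i) = 1 := by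
    intro i hi
    rcases Nat.lt_or_ge (i : ℕ) 1 with h | h
    · have h0 : (i : ℕ) = 0 := by omega
      have e14 := block12 i h0 _ (Or.inr (Or.inr (Or.inl rfl)))
      have e15 := block12 i h0 _ (Or.inr (Or.inr (Or.inr (Or.inl rfl))))
      simp only [map_mul, map_inv, map_pow, map_commutatorElement, Gen.B2, Gen.C, Gen.D,
        pm_of] at e14 e15
      rw [mul_inv_eq_one] at e14 e15
      have hc : gen k n p r (Gen.c i) = 1 := by
        rw [← e14, hb2g, commutatorElement_def]; group
      refine ⟨hc, ?_⟩
      rw [← e15, hb2g]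
      have : ⁅(1 : G k n p r), (gen k n p r (Gen.c i))⁻¹⁆ = 1 := by
        rw [commutatorElement_def]; group
      rw [this, one_pow]
    · have h2 : 2 ≤ (i : ℕ) := by omega
      have e22 := block14 i h2 _ (Or.inl rfl)
      have e23 := block14 i h2 _ (Or.inr rfl)
      simp only [map_mul, map_inv, map_pow, map_commutatorElement, Gen.B2, Gen.C, Gen.D,
        pm_of] at e22 e23
      rw [mul_inv_eq_one] at e22 e23
      constructor
      · rw [← e22, hb2g, commutatorElement_def]; group
      · rw [← e23, hb2g, commutatorElement_def]; group
  -- the surface relation gives [C1, D1] = 1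
  simp only [map_mul, map_inv, map_commutatorElement, map_list_prod, List.map_ofFn,
    Function.comp_def, Gen.C, Gen.D, Gen.Ct, Gen.Dt, pm_of] at hr11
  rw [prod_ofFn_eq_single _ i1 (by
    intro i hne
    have hne' : (i : ℕ) ≠ 1 := fun hval => hne (Fin.ext hval)
    obtain ⟨hci, hdi⟩ := hcd i hne'
    rw [hci, hdi, commutatorElement_def]; group)] at hr11
  rw [← hS, ← hT, hS1, hT1] at hr11
  have hcomm : ⁅C1, D1⁆ = 1 := by
    have h1 : ⁅(1 : G k n p r), (1 : G k n p r)⁆ = 1 := by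
      rw [commutatorElement_def]; group
    rwa [h1, mul_one] at hr11
  have ccd : Commute C1 D1 := commutatorElement_eq_one_iff_commute.mp hcomm
  -- classification of all generators
  have class' : ∀ g : Gen k, gen k n p r g = 1 ∨ gen k n p r g = C1 ∨ gen k n p r g = D1 := by
    intro g
    cases g with
    | a1 => exact Or.inl hA1
    | b1 => exact Or.inl hB1
    | a2 => exact Or.inl hA'1
    | b2 => exact Or.inl hB'1
    | ct => exact Or.inl hS1
    | dt => exact Or.inl hT1
    | c i =>
      rcases Nat.decEq (i : ℕ) 1 with h | h
      · exact Or.inl (hcd i h).1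
      · have : i = i1 := Fin.ext h
        rw [this]; exact Or.inr (Or.inl rfl)
    | d i =>
      rcases Nat.decEq (i : ℕ) 1 with h | h
      · exact Or.inl (hcd i h).2
      · have : i = i1 := Fin.ext h
        rw [this]; exact Or.inr (Or.inr rfl)
  have gens_comm : ∀ g h : Gen k, Commute (gen k n p r g) (gen k n p r h) := by
    intro g h
    rcases class' g with hg | hg | hg <;> rcases class' h with hh | hh | hh <;>
      rw [hg, hh] <;>
      first
        | exact Commute.one_left _
        | exact Commute.one_right _
        | exact Commute.refl _
        | exact ccd
        | exact ccd.symm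
  have step : ∀ (w : FreeGroup (Gen k)) (y : G k n p r),
      (∀ g : Gen k, Commute (gen k n p r g) y) → Commute (pm k n p r w) y := by
    intro w y hy
    induction w using FreeGroup.induction_on with
    | C1 => simpa using Commute.one_left y
    | of g => exact hy g
    | inv_of g ih => rw [map_inv]; exact ih.inv_left
    | mul u v ihu ihv => rw [map_mul]; exact ihu.mul_left ihv
  have habel : ∀ x y : G k n p r, x * y = y * x := by
    intro x y
    obtain ⟨w, rfl⟩ := pm_surj k n p r x
    obtain ⟨v, rfl⟩ := pm_surj k n p r y
    have H1 : ∀ g : Gen k, Commute (gen k n p r g) (pm k n p r v) :=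
      fun g => (step v (gen k n p r g) fun h => gens_comm h g).symm
    exact step w _ H1
  exact ⟨ccd, hC1p, hD1r, habel⟩
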